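/- Every finite subgroup of SO(3) either fixes a plane through the origin (i.e., is conjugate to a subgroup of O(2) embedded as stabilizer of an axis) or has order at most 60. -/

import Mathlib

set_option synthInstance.maxHeartbeats 1000000

open Matrix

namespace SO3Aux

variable {A : Matrix (Fin 3) (Fin 3) ℝ}

lemma dot_pres (hA : Aᵀ * A = 1) (v w : Fin 3 → ℝ) :
    A.mulVec v ⬝ᵥ A.mulVec w = v ⬝ᵥ w := by
  rw [Matrix.dotProduct_mulVec, ← Matrix.mulVec_transpose, Matrix.mulVec_mulVec, hA,
    Matrix.one_mulVec]

lemma exists_fixed (hA : Aᵀ * A = 1) (hdet : A.det = 1) :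
    ∃ v : Fin 3 → ℝ, v ≠ 0 ∧ A.mulVec v = v := by
  have hdetT : Aᵀ.det = 1 := by rw [Matrix.det_transpose]; exact hdet
  have h1 : Aᵀ * (A - 1) = (1 - A)ᵀ := by
    rw [Matrix.mul_sub, hA, Matrix.mul_one, Matrix.transpose_sub, Matrix.transpose_one]
  have h2 : (A - 1).det = (1 - A).det := by
    calc (A - 1).det = Aᵀ.det * (A - 1).det := by rw [hdetT, one_mul]
    _ = (Aᵀ * (A - 1)).det := (Matrix.det_mul _ _).symm
    _ = (1 - A)ᵀ.det := by rw [h1]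
    _ = (1 - A).det := Matrix.det_transpose _
  have h3 : (1 - A : Matrix (Fin 3) (Fin 3) ℝ) = -(A - 1) := (neg_sub A 1).symm
  have h4 : (A - 1).det = 0 := by
    have := h2
    rw [h3, Matrix.det_neg] at this
    simp only [Fintype.card_fin] at this
    norm_num at this
    linarith
  obtain ⟨v, hv0, hv⟩ := (Matrix.exists_mulVec_eq_zero_iff).mpr h4
  refine ⟨v, hv0, ?_⟩
  rwa [Matrix.sub_mulVec, Matrix.one_mulVec, sub_eq_zero] at hv

lemma exists_unit_fixed (hA : Aᵀ * A = 1) (hdet : A.det = 1) :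
    ∃ v : Fin 3 → ℝ, v ⬝ᵥ v = 1 ∧ A.mulVec v = v := by
  obtain ⟨v, hv0, hv⟩ := exists_fixed hA hdet
  have hvv : 0 < v ⬝ᵥ v := by
    have hnn : 0 ≤ v ⬝ᵥ v := Finset.sum_nonneg fun i _ => mul_self_nonneg (v i)
    rcases lt_or_eq_of_le hnn with h | h
    · exact h
    · exact absurd (dotProduct_self_eq_zero.mp h.symm) hv0
  refine ⟨(Real.sqrt (v ⬝ᵥ v))⁻¹ • v, ?_, ?_⟩
  · rw [smul_dotProduct, dotProduct_smul, smul_smul, smul_eq_mul]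
    rw [← mul_inv, Real.mul_self_sqrt hvv.le]
    exact inv_mul_cancel₀ (ne_of_gt hvv)
  · rw [Matrix.mulVec_smul, hv]

end SO3Aux

namespace SO3Aux
open Matrix

lemma eq_one_of_fixes_indep {A : Matrix (Fin 3) (Fin 3) ℝ} (hA : Aᵀ * A = 1) (hdet : A.det = 1)
    {x y : Fin 3 → ℝ} (hx : A.mulVec x = x) (hy : A.mulVec y = y)
    (hx0 : x ≠ 0) (hind : ¬ ∃ c : ℝ, y = c • x) : A = 1 := by
  have hpair : LinearIndependent ℝ ![x, y] := by
    rw [LinearIndependent.pair_iff' hx0]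
    intro a ha
    exact hind ⟨a, ha.symm⟩
  set u := x ⨯₃ y with hu
  have hu0 : u ≠ 0 := crossProduct_ne_zero_iff_linearIndependent.mpr hpair
  have hux : x ⬝ᵥ u = 0 := dot_self_cross x y
  have huy : y ⬝ᵥ u = 0 := dot_cross_self x y
  have huu : u ⬝ᵥ u ≠ 0 := fun h => hu0 (dotProduct_self_eq_zero.mp h)
  -- linear independence of the three vectors
  have hindep : LinearIndependent ℝ ![x, y, u] := by
    rw [Fintype.linearIndependent_iff]
    intro g hg
    have hg' : g 0 • x + g 1 • y + g 2 • u = 0 := by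
      have := hg
      simpa [Fin.sum_univ_three, add_assoc] using this
    have hg2 : g 2 = 0 := by
      have hdot : (g 0 • x + g 1 • y + g 2 • u) ⬝ᵥ u = 0 := by rw [hg']; simp
      rw [add_dotProduct, add_dotProduct, smul_dotProduct,
        smul_dotProduct, smul_dotProduct, hux, huy] at hdot
      simp only [smul_eq_mul, mul_zero, zero_add, add_zero] at hdot
      exact (mul_eq_zero.mp hdot).resolve_right huu
    have hg01 : g 0 • x + g 1 • y = 0 := by
      rw [hg2, zero_smul, add_zero] at hg'; exact hg'
    obtain ⟨h0, h1⟩ := (LinearIndependent.pair_iff.mp hpair) (g 0) (g 1) hg01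
    intro i; fin_cases i <;> assumption
  have hcard : Fintype.card (Fin 3) = Module.finrank ℝ (Fin 3 → ℝ) := by
    simp
  let b : Module.Basis (Fin 3) ℝ (Fin 3 → ℝ) := basisOfLinearIndependentOfCardEqFinrank hindep hcard
  have hb : ⇑b = ![x, y, u] := coe_basisOfLinearIndependentOfCardEqFinrank hindep hcard
  -- A preserves dot products
  have hdp := dot_pres hA
  -- A u is orthogonal to x and y
  have hAux : A.mulVec u ⬝ᵥ x = 0 := by
    have : A.mulVec u ⬝ᵥ A.mulVec x = u ⬝ᵥ x := hdp u x
    rw [hx] at this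
    rw [this, dotProduct_comm]; exact hux
  have hAuy : A.mulVec u ⬝ᵥ y = 0 := by
    have : A.mulVec u ⬝ᵥ A.mulVec y = u ⬝ᵥ y := hdp u y
    rw [hy] at this
    rw [this, dotProduct_comm]; exact huy
  -- any vector orthogonal to x and y is a multiple of u
  have hperp : ∀ w : Fin 3 → ℝ, w ⬝ᵥ x = 0 → w ⬝ᵥ y = 0 → ∃ c : ℝ, w = c • u := by
    intro w hwx hwy
    have hrepr : w = b.repr w 0 • x + b.repr w 1 • y + b.repr w 2 • u := by
      conv_lhs => rw [← b.sum_repr w]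
      rw [Fin.sum_univ_three, hb]
      simp [add_assoc]
    set a0 := b.repr w 0; set a1 := b.repr w 1; set a2 := b.repr w 2
    refine ⟨a2, ?_⟩
    set p := a0 • x + a1 • y with hp
    have hwp : w = p + a2 • u := by rw [hp, hrepr]
    have hpx : p ⬝ᵥ x = 0 := by
      have : w ⬝ᵥ x = p ⬝ᵥ x + a2 * (u ⬝ᵥ x) := by
        rw [hwp, add_dotProduct, smul_dotProduct]; simp
      rw [hwx, dotProduct_comm u x] at this
      rw [hux] at this; linarith
    have hpy : p ⬝ᵥ y = 0 := by
      have : w ⬝ᵥ y = p ⬝ᵥ y + a2 * (u ⬝ᵥ y) := by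
        rw [hwp, add_dotProduct, smul_dotProduct]; simp
      rw [hwy, dotProduct_comm u y] at this
      rw [huy] at this; linarith
    have hpp : p ⬝ᵥ p = 0 := by
      have : p ⬝ᵥ p = a0 * (x ⬝ᵥ p) + a1 * (y ⬝ᵥ p) := by
        rw [hp, add_dotProduct, smul_dotProduct, smul_dotProduct]; simp
      rw [dotProduct_comm x p, dotProduct_comm y p, hpx, hpy] at this
      simpa using this
    have hp0 : p = 0 := dotProduct_self_eq_zero.mp hpp
    rw [hwp, hp0, zero_add]
  obtain ⟨c, hc⟩ := hperp (A.mulVec u) hAux hAuy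
  -- determinant computation in the basis b
  have hlin : Matrix.toLin' A = Matrix.toLin b b (Matrix.diagonal ![1, 1, c]) := by
    apply b.ext
    intro i
    rw [Matrix.toLin_self]
    fin_cases i <;>
      simp [hb, Matrix.toLin'_apply, Fin.sum_univ_three, Matrix.diagonal_apply, hx, hy, hc]
  have hdetc : c = 1 := by
    have h1 : LinearMap.det (Matrix.toLin' A) = A.det := LinearMap.det_toLin' A
    have h2 : LinearMap.det (Matrix.toLin b b (Matrix.diagonal ![1, 1, c]))
        = (Matrix.diagonal ![1, 1, c]).det := LinearMap.det_toLin b _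
    rw [hlin, h2, Matrix.det_diagonal] at h1
    rw [hdet] at h1
    simpa [Fin.prod_univ_three] using h1
  rw [hdetc] at hc
  rw [one_smul] at hc
  -- A fixes the whole basis, hence is the identity
  have : Matrix.toLin' A = Matrix.toLin' (1 : Matrix (Fin 3) (Fin 3) ℝ) := by
    apply b.ext
    intro i
    fin_cases i <;> simp [hb, Matrix.toLin'_apply, hx, hy, hc]
  exact Matrix.toLin'.injective this

end SO3Aux

namespace SO3Aux
open Matrix

lemma fixed_pair {A : Matrix (Fin 3) (Fin 3) ℝ} (hA : Aᵀ * A = 1) (hdet : A.det = 1)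
    (hA1 : A ≠ 1) :
    ∃ u : Fin 3 → ℝ, u ⬝ᵥ u = 1 ∧ u ≠ -u ∧
      {v : Fin 3 → ℝ | v ⬝ᵥ v = 1 ∧ A.mulVec v = v} = {u, -u} := by
  obtain ⟨u, huu, hAu⟩ := exists_unit_fixed hA hdet
  have hu0 : u ≠ 0 := by
    intro h; rw [h] at huu; simp at huu
  have hune : u ≠ -u := by
    intro h
    have : u ⬝ᵥ u = -(u ⬝ᵥ u) := by nth_rewrite 1 [h]; rw [neg_dotProduct]
    rw [huu] at this; norm_num at this
  refine ⟨u, huu, hune, ?_⟩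
  ext v
  simp only [Set.mem_setOf_eq, Set.mem_insert_iff, Set.mem_singleton_iff]
  constructor
  · rintro ⟨hvv, hAv⟩
    have hdep : ∃ c : ℝ, v = c • u := by
      by_contra h
      exact hA1 (eq_one_of_fixes_indep hA hdet hAu hAv hu0 h)
    obtain ⟨c, rfl⟩ := hdep
    have : c * c = 1 := by
      rw [smul_dotProduct, dotProduct_smul, huu] at hvv
      simpa using hvv
    rcases mul_self_eq_one_iff.mp this with h | h
    · left; rw [h, one_smul]
    · right; rw [h, neg_smul, one_smul]
  · rintro (rfl | rfl)
    · exact ⟨huu, hAu⟩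
    · refine ⟨by simpa using huu, ?_⟩
      rw [Matrix.mulVec_neg, hAu]

end SO3Aux

namespace SO3Aux
open Matrix MulAction

abbrev G3 := Matrix.orthogonalGroup (Fin 3) ℝ

lemma coe_transpose_mul_self (g : G3) :
    (g : Matrix (Fin 3) (Fin 3) ℝ)ᵀ * (g : Matrix (Fin 3) (Fin 3) ℝ) = 1 := by
  have h := g.2.1
  rwa [Matrix.star_eq_conjTranspose, Matrix.conjTranspose_eq_transpose_of_trivial] at h

lemma coe_matrix_ne_one {H : Subgroup G3} (g : ↥H) (hg : g ≠ 1) :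
    ((g : G3) : Matrix (Fin 3) (Fin 3) ℝ) ≠ 1 := by
  intro h
  exact hg (Subtype.ext (Subtype.ext h))

variable (H : Subgroup G3)

/-- The set of poles: unit vectors fixed by some nonidentity element of `H`. -/
def polesSet : Set (Fin 3 → ℝ) :=
  {x | x ⬝ᵥ x = 1 ∧ ∃ g : G3, g ∈ H ∧ g ≠ 1 ∧ (g : Matrix (Fin 3) (Fin 3) ℝ).mulVec x = x}

def Poles : Type := {x : Fin 3 → ℝ // x ∈ polesSet H}

variable {H}

lemma poles_mem_closure (h : ↥H) (x : Poles H) :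
    ((h : G3) : Matrix (Fin 3) (Fin 3) ℝ).mulVec x.1 ∈ polesSet H := by
  obtain ⟨hx1, g, hgH, hg1, hgx⟩ := x.2
  constructor
  · rw [dot_pres (coe_transpose_mul_self (h : G3)), hx1]
  · refine ⟨(h : G3) * g * (h : G3)⁻¹, mul_mem (mul_mem h.2 hgH) (inv_mem h.2), ?_, ?_⟩
    · intro hc
      exact hg1 (by simpa using (mul_inv_eq_one.mp hc :))
    · rw [Matrix.mulVec_mulVec]
      have h1 : (((h : G3) * g * (h : G3)⁻¹ : G3) : Matrix (Fin 3) (Fin 3) ℝ)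
          * ((h : G3) : Matrix (Fin 3) (Fin 3) ℝ)
          = (((h : G3) * g * (h : G3)⁻¹ * (h : G3) : G3) : Matrix (Fin 3) (Fin 3) ℝ) := by
        norm_cast
      rw [h1, inv_mul_cancel_right, Submonoid.coe_mul, ← Matrix.mulVec_mulVec, hgx]

instance polesAction : MulAction ↥H (Poles H) where
  smul h x := ⟨((h : G3) : Matrix (Fin 3) (Fin 3) ℝ).mulVec x.1, poles_mem_closure h x⟩
  one_smul x := by
    apply Subtype.ext
    show (((1 : ↥H) : G3) : Matrix (Fin 3) (Fin 3) ℝ).mulVec x.1 = x.1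
    simp
  mul_smul g h x := by
    apply Subtype.ext
    show (((g * h : ↥H) : G3) : Matrix (Fin 3) (Fin 3) ℝ).mulVec x.1
      = ((g : G3) : Matrix (Fin 3) (Fin 3) ℝ).mulVec
          (((h : G3) : Matrix (Fin 3) (Fin 3) ℝ).mulVec x.1)
    rw [Matrix.mulVec_mulVec]
    norm_cast

lemma poles_smul_coe (h : ↥H) (x : Poles H) :
    (h • x).1 = ((h : G3) : Matrix (Fin 3) (Fin 3) ℝ).mulVec x.1 := rfl

end SO3Aux

namespace SO3Aux

lemma arith_sorted (N a b c : ℕ) (hN : 60 < N) (hcb : c ≤ b) (hba : b ≤ a)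
    (ha : a ∣ N) (hb : b ∣ N) (hc : c ∣ N) (hc3 : 3 ≤ c)
    (ha2 : 2 * a ≤ N) (hb2 : 2 * b ≤ N) (hsum : a + b + c = N + 2) : False := by
  obtain ⟨k, hk⟩ := ha
  have ha0 : 0 < a := by omega
  have hk_ge : 2 ≤ k := by
    by_contra h
    push_neg at h
    interval_cases k <;> omega
  have hk_le : k ≤ 2 := by
    by_contra h
    push_neg at h
    have : a * 3 ≤ a * k := Nat.mul_le_mul_left a h
    omega
  have hk2 : k = 2 := by omega
  subst hk2
  -- now N = 2a, b + c = a + 2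
  obtain ⟨m, hm⟩ := hb
  have hb0 : 0 < b := by omega
  have hm_ge : 2 ≤ m := by
    by_contra h
    push_neg at h
    interval_cases m <;> omega
  have hm_le : m ≤ 3 := by
    by_contra h
    push_neg at h
    have : b * 4 ≤ b * m := Nat.mul_le_mul_left b h
    omega
  interval_cases m
  · -- m = 2 : a = b, c = 2, contradiction with c ≥ 3
    omega
  · -- m = 3 : 2a = 3b
    obtain ⟨t, ht⟩ := hc
    have hc0 : 0 < c := by omega
    have ht_le : t ≤ 6 := by
      by_contra h
      push_neg at h
      have : c * 7 ≤ c * t := Nat.mul_le_mul_left c h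
      omega
    interval_cases t <;> omega

lemma arith (N a b c : ℕ) (hN : 60 < N)
    (ha : a ∣ N) (hb : b ∣ N) (hc : c ∣ N) (ha3 : 3 ≤ a) (hb3 : 3 ≤ b) (hc3 : 3 ≤ c)
    (ha2 : 2 * a ≤ N) (hb2 : 2 * b ≤ N) (hc2 : 2 * c ≤ N)
    (hsum : a + b + c = N + 2) : False := by
  rcases le_total a b with h1 | h1 <;> rcases le_total b c with h2 | h2 <;>
    rcases le_total a c with h3 | h3
  · exact arith_sorted N c b a hN h1 h2 hc hb ha ha3 hc2 hb2 (by omega)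
  · exact arith_sorted N c b a hN h1 h2 hc hb ha ha3 hc2 hb2 (by omega)
  · exact arith_sorted N b c a hN h3 h2 hb hc ha ha3 hb2 hc2 (by omega)
  · exact arith_sorted N b a c hN h3 h1 hb ha hc hc3 hb2 ha2 (by omega)
  · exact arith_sorted N c a b hN h1 h3 hc ha hb hb3 hc2 ha2 (by omega)
  · exact arith_sorted N a c b hN h2 h3 ha hc hb hb3 ha2 hc2 (by omega)
  · exact arith_sorted N a b c hN h2 h1 ha hb hc hc3 ha2 hb2 (by omega)
  · exact arith_sorted N a b c hN h2 h1 ha hb hc hc3 ha2 hb2 (by omega)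

end SO3Aux

namespace SO3Aux
open Matrix MulAction

lemma exists_small_orbit (H : Subgroup G3) [Finite ↥H]
    (hdet : ∀ g ∈ H, Matrix.det (g : Matrix (Fin 3) (Fin 3) ℝ) = 1)
    (hN : 60 < Nat.card ↥H) :
    ∃ x : Poles H, Nat.card (MulAction.orbit ↥H x) ≤ 2 := by
  classical
  letI : Fintype ↥H := Fintype.ofFinite _
  -- the set of poles is finite
  have hfinset : (polesSet H).Finite := by
    have hsub : polesSet H ⊆ ⋃ (g : ↥H),
        (if (g : G3) = 1 then (∅ : Set (Fin 3 → ℝ)) else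
          {v | v ⬝ᵥ v = 1 ∧ ((g : G3) : Matrix (Fin 3) (Fin 3) ℝ).mulVec v = v}) := by
      rintro x ⟨hx1, g, hgH, hg1, hgx⟩
      refine Set.mem_iUnion.mpr ⟨⟨g, hgH⟩, ?_⟩
      rw [if_neg hg1]
      exact ⟨hx1, hgx⟩
    refine Set.Finite.subset (Set.finite_iUnion ?_) hsub
    intro g
    by_cases hg : (g : G3) = 1
    · rw [if_pos hg]; exact Set.finite_empty
    · rw [if_neg hg]
      obtain ⟨u, huu, hune, hset⟩ := fixed_pair (coe_transpose_mul_self (g : G3))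
        (hdet _ g.2) (fun hm => hg (Subtype.ext hm))
      rw [hset]
      exact (Set.finite_singleton (-u)).insert u
  letI : Finite (Poles H) := hfinset.to_subtype
  letI : Fintype (Poles H) := Fintype.ofFinite _
  letI instOm : Fintype (Quotient (MulAction.orbitRel ↥H (Poles H))) := Fintype.ofFinite _
  letI instOm2 : Fintype (MulAction.orbitRel.Quotient ↥H (Poles H)) := instOm
  letI instFix : ∀ h : ↥H, Fintype (MulAction.fixedBy (Poles H) h) := fun _ => Fintype.ofFinite _
  letI instOrb : ∀ ω : MulAction.orbitRel.Quotient ↥H (Poles H),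
      Fintype (MulAction.orbit ↥H ω.out) := fun _ => Fintype.ofFinite _
  letI instOrb' : ∀ x : Poles H, Fintype (MulAction.orbit ↥H x) := fun _ => Fintype.ofFinite _
  letI instStab : ∀ x : Poles H, Fintype (MulAction.stabilizer ↥H x) := fun _ => Fintype.ofFinite _
  set N := Fintype.card ↥H with hNdef
  have hNN : Nat.card ↥H = N := Nat.card_eq_fintype_card
  rw [hNN] at hN
  -- Burnside
  have burnside := MulAction.sum_card_fixedBy_eq_card_orbits_mul_card_group ↥H (Poles H)
  -- each nonidentity element fixes exactly two poles
  have hfix2 : ∀ h : ↥H, h ≠ 1 → Fintype.card (MulAction.fixedBy (Poles H) h) = 2 := by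
    intro h hne
    obtain ⟨u, huu, hune, hset⟩ := fixed_pair (coe_transpose_mul_self (h : G3))
      (hdet _ h.2) (coe_matrix_ne_one h hne)
    have hu_fix : ((h : G3) : Matrix (Fin 3) (Fin 3) ℝ).mulVec u = u := by
      have hu_mem : u ∈ {v : Fin 3 → ℝ | v ⬝ᵥ v = 1 ∧
          ((h : G3) : Matrix (Fin 3) (Fin 3) ℝ).mulVec v = v} := by
        rw [hset]; exact Set.mem_insert _ _
      exact hu_mem.2
    have hnu_fix : ((h : G3) : Matrix (Fin 3) (Fin 3) ℝ).mulVec (-u) = -u := by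
      have hnu_mem : -u ∈ {v : Fin 3 → ℝ | v ⬝ᵥ v = 1 ∧
          ((h : G3) : Matrix (Fin 3) (Fin 3) ℝ).mulVec v = v} := by
        rw [hset]; exact Set.mem_insert_iff.mpr (Or.inr rfl)
      exact hnu_mem.2
    have hne' : (h : G3) ≠ 1 := fun e => hne (Subtype.ext e)
    have hu_pm : u ∈ polesSet H := ⟨huu, (h : G3), h.2, hne', hu_fix⟩
    have hnu_pm : -u ∈ polesSet H :=
      ⟨by simp [neg_dotProduct, dotProduct_neg, huu], (h : G3), h.2, hne', hnu_fix⟩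
    have hsetfix : MulAction.fixedBy (Poles H) h
        = ({⟨u, hu_pm⟩, ⟨-u, hnu_pm⟩} : Set (Poles H)) := by
      ext z
      simp only [MulAction.mem_fixedBy, Set.mem_insert_iff, Set.mem_singleton_iff]
      constructor
      · intro hz
        have hz1 : ((h : G3) : Matrix (Fin 3) (Fin 3) ℝ).mulVec z.1 = z.1 :=
          congrArg Subtype.val hz
        have : z.1 ∈ ({u, -u} : Set (Fin 3 → ℝ)) := by
          rw [← hset]; exact ⟨z.2.1, hz1⟩
        rcases this with h1 | h1
        · left; exact Subtype.ext h1
        · right; exact Subtype.ext h1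
      · rintro (rfl | rfl)
        · exact Subtype.ext hu_fix
        · exact Subtype.ext hnu_fix
    rw [← Nat.card_eq_fintype_card, hsetfix, Nat.card_coe_set_eq]
    exact Set.ncard_pair (a := (⟨u, hu_pm⟩ : Poles H)) (b := ⟨-u, hnu_pm⟩)
        (fun e => hune (congrArg Subtype.val e))
  -- sum over the group
  have hfixsum : ∑ h : ↥H, Fintype.card (MulAction.fixedBy (Poles H) h)
      = (N - 1) * 2 + Fintype.card (Poles H) := by
    have h1mem : (1 : ↥H) ∈ Finset.univ := Finset.mem_univ _
    rw [← Finset.sum_erase_add _ _ h1mem]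
    have hconst : ∀ h ∈ Finset.univ.erase (1 : ↥H),
        Fintype.card (MulAction.fixedBy (Poles H) h) = 2 := fun h hh =>
      hfix2 h (Finset.ne_of_mem_erase hh)
    rw [Finset.sum_congr rfl hconst, Finset.sum_const, Finset.card_erase_of_mem h1mem,
      Finset.card_univ, smul_eq_mul]
    congr 1
    have h1univ : MulAction.fixedBy (Poles H) (1 : ↥H) = Set.univ :=
      MulAction.fixedBy_one_eq_univ (Poles H) ↥H
    rw [← Nat.card_eq_fintype_card, h1univ, ← Nat.card_eq_fintype_card]
    exact Nat.card_congr (Equiv.Set.univ _)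
  -- orbit decomposition
  have hdecomp : Fintype.card (Poles H)
      = ∑ ω : MulAction.orbitRel.Quotient ↥H (Poles H),
          Fintype.card (MulAction.orbit ↥H ω.out) := by
    rw [Fintype.card_congr (MulAction.selfEquivSigmaOrbits ↥H (Poles H)), Fintype.card_sigma]
  -- suppose all orbits have size ≥ 3
  by_contra hcon
  push_neg at hcon
  have horb3 : ∀ ω : MulAction.orbitRel.Quotient ↥H (Poles H),
      3 ≤ Fintype.card (MulAction.orbit ↥H ω.out) := by
    intro ω
    have := hcon ω.out
    rw [Nat.card_eq_fintype_card] at this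
    omega
  -- orbit-stabilizer facts
  have horbfacts : ∀ x : Poles H, Fintype.card (MulAction.orbit ↥H x) ∣ N
      ∧ 2 * Fintype.card (MulAction.orbit ↥H x) ≤ N := by
    intro x
    have hos := MulAction.card_orbit_mul_card_stabilizer_eq_card_group ↥H x
    have hstab2 : 2 ≤ Fintype.card (MulAction.stabilizer ↥H x) := by
      obtain ⟨hx1, g, hgH, hg1, hgx⟩ := x.2
      have hmem : (⟨g, hgH⟩ : ↥H) ∈ MulAction.stabilizer ↥H x := by
        show (⟨g, hgH⟩ : ↥H) • x = x
        exact Subtype.ext hgx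
      have hne1 : (⟨⟨g, hgH⟩, hmem⟩ : MulAction.stabilizer ↥H x) ≠ 1 := by
        intro e
        have e1 : (⟨g, hgH⟩ : ↥H) = 1 := Subtype.ext_iff.mp e
        exact hg1 (Subtype.ext_iff.mp e1)
      have : Nontrivial (MulAction.stabilizer ↥H x) := ⟨⟨_, 1, hne1⟩⟩
      exact Fintype.one_lt_card_iff_nontrivial.mpr this
    constructor
    · exact ⟨_, hos.symm⟩
    · calc 2 * Fintype.card (MulAction.orbit ↥H x)
          ≤ Fintype.card (MulAction.stabilizer ↥H x) * Fintype.card (MulAction.orbit ↥H x) :=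
            Nat.mul_le_mul_right _ hstab2
        _ = N := by rw [mul_comm]; exact hos
  -- put the counting together
  rw [hfixsum] at burnside
  rw [← hNdef] at burnside
  set k := Fintype.card (Quotient (MulAction.orbitRel ↥H (Poles H))) with hk
  have hkeq : Fintype.card (MulAction.orbitRel.Quotient ↥H (Poles H)) = k := rfl
  set cardX := Fintype.card (Poles H) with hcX
  -- burnside : (N-1)*2 + cardX = k * N
  have hXsum : cardX = ∑ ω : MulAction.orbitRel.Quotient ↥H (Poles H),
      Fintype.card (MulAction.orbit ↥H ω.out) := hdecomp
  -- bounds on k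
  have hub : 2 * cardX ≤ k * N := by
    rw [hXsum, Finset.mul_sum]
    calc ∑ ω : MulAction.orbitRel.Quotient ↥H (Poles H),
        2 * Fintype.card (MulAction.orbit ↥H ω.out)
        ≤ ∑ _ω : MulAction.orbitRel.Quotient ↥H (Poles H), N :=
          Finset.sum_le_sum (fun ω _ => (horbfacts ω.out).2)
      _ = k * N := by rw [Finset.sum_const, Finset.card_univ, smul_eq_mul, hkeq]
  have hlb : 3 * k ≤ cardX := by
    rw [hXsum]
    calc 3 * k = ∑ _ω : MulAction.orbitRel.Quotient ↥H (Poles H), 3 := by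
          rw [Finset.sum_const, Finset.card_univ, smul_eq_mul, hkeq, mul_comm]
      _ ≤ _ := Finset.sum_le_sum (fun ω _ => horb3 ω)
  have hk3 : k ≤ 3 := by
    by_contra h
    push_neg at h
    have h4 : 4 * N ≤ k * N := Nat.mul_le_mul_right N h
    omega
  have hN1 : 1 ≤ N := by omega
  interval_cases k
  · omega
  · omega
  · omega
  · -- k = 3 : three orbits summing to N + 2
    have hcard3 : Fintype.card (MulAction.orbitRel.Quotient ↥H (Poles H)) = 3 := hkeq
    have hcard3' : (Finset.univ : Finset (MulAction.orbitRel.Quotient ↥H (Poles H))).card = 3 := by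
      rw [Finset.card_univ]; exact hcard3
    obtain ⟨ω1, ω2, ω3, h12, h13, h23, huniv⟩ := Finset.card_eq_three.mp hcard3'
    have hsum3 : (∑ ω : MulAction.orbitRel.Quotient ↥H (Poles H),
        Fintype.card (MulAction.orbit ↥H ω.out))
        = Fintype.card (MulAction.orbit ↥H ω1.out) + Fintype.card (MulAction.orbit ↥H ω2.out)
          + Fintype.card (MulAction.orbit ↥H ω3.out) := by
      rw [huniv, Finset.sum_insert (by simp [h12, h13]),
        Finset.sum_insert (by simp [h23]), Finset.sum_singleton, add_assoc]
    exact arith N _ _ _ hN (horbfacts ω1.out).1 (horbfacts ω2.out).1 (horbfacts ω3.out).1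
      (horb3 ω1) (horb3 ω2) (horb3 ω3)
      (horbfacts ω1.out).2 (horbfacts ω2.out).2 (horbfacts ω3.out).2
      (by omega)

end SO3Aux

open SO3Aux in
/-- Every finite subgroup of `SO(3)` — i.e. a finite subgroup of the orthogonal group
`O(3)` all of whose elements have determinant `1` — either fixes a plane through the
origin (equivalently, there is a nonzero normal vector `v` sent to `±v` by every element)
or has order at most `60`. -/
theorem finite_subgroup_SO3_fixes_plane_or_card_le_60
    (H : Subgroup (Matrix.orthogonalGroup (Fin 3) ℝ)) [Finite H]
    (hdet : ∀ g ∈ H, Matrix.det (g : Matrix (Fin 3) (Fin 3) ℝ) = 1) :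
    (∃ v : Fin 3 → ℝ, v ≠ 0 ∧ ∀ g ∈ H,
      Matrix.mulVec (g : Matrix (Fin 3) (Fin 3) ℝ) v = v ∨
      Matrix.mulVec (g : Matrix (Fin 3) (Fin 3) ℝ) v = -v) ∨
    Nat.card H ≤ 60 := by
  classical
  by_cases hle : Nat.card H ≤ 60
  · exact Or.inr hle
  push_neg at hle
  left
  obtain ⟨x, hx⟩ := exists_small_orbit H hdet hle
  have hx1 : x.1 ⬝ᵥ x.1 = 1 := x.2.1
  have hx0 : x.1 ≠ 0 := by
    intro e
    rw [e, zero_dotProduct] at hx1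
    norm_num at hx1
  have key : ∀ h : ↥H, h • x = x ∨ (h • x).1 = -x.1 := by
    by_cases hall : ∀ h : ↥H, h • x = x
    · exact fun h => Or.inl (hall h)
    · push_neg at hall
      obtain ⟨h₀, hh₀⟩ := hall
      set z := h₀ • x with hzdef
      have hz_orb : z ∈ MulAction.orbit ↥H x := MulAction.mem_orbit x h₀
      have hsub : ({x, z} : Set (SO3Aux.Poles H)) ⊆ MulAction.orbit ↥H x := by
        rintro w (h | h)
        · rw [h]; exact MulAction.mem_orbit_self x
        · rw [h]; exact hz_orb
      have hfin : (MulAction.orbit ↥H x).Finite := Set.finite_range _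
      have horb_eq : MulAction.orbit ↥H x = {x, z} := by
        refine (Set.eq_of_subset_of_ncard_le hsub ?_ hfin).symm
        rw [Set.ncard_pair (Ne.symm hh₀), ← Nat.card_coe_set_eq]
        exact hx
      have hstabz : ∀ h : ↥H, h • x = x → h • z = z := by
        intro h hh
        have hmem : h • z ∈ MulAction.orbit ↥H x := by
          rw [hzdef, ← mul_smul]
          exact MulAction.mem_orbit x (h * h₀)
        rw [horb_eq] at hmem
        rcases hmem with h1 | h1
        · exfalso
          apply hh₀
          calc h₀ • x = z := rfl
            _ = h⁻¹ • (h • z) := (inv_smul_smul h z).symm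
            _ = h⁻¹ • x := by rw [h1]
            _ = h⁻¹ • (h • x) := by rw [hh]
            _ = x := inv_smul_smul h x
        · exact h1
      obtain ⟨hx1', g, hgH, hg1, hgx⟩ := x.2
      have hrx : (⟨g, hgH⟩ : ↥H) • x = x := Subtype.ext hgx
      have hrz := hstabz _ hrx
      have hgz : (g : Matrix (Fin 3) (Fin 3) ℝ).mulVec z.1 = z.1 := congrArg Subtype.val hrz
      have hdep : ∃ c : ℝ, z.1 = c • x.1 := by
        by_contra hcon
        exact hg1 (Subtype.ext (eq_one_of_fixes_indep (coe_transpose_mul_self g)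
          (hdet g hgH) hgx hgz hx0 hcon))
      obtain ⟨c, hc⟩ := hdep
      have hz1 : z.1 ⬝ᵥ z.1 = 1 := z.2.1
      have hcc : c * c = 1 := by
        rw [hc, smul_dotProduct, dotProduct_smul, hx1] at hz1
        simpa using hz1
      have hcneg : c = -1 := by
        rcases mul_self_eq_one_iff.mp hcc with h | h
        · exfalso
          apply hh₀
          apply Subtype.ext
          show z.1 = x.1
          rw [hc, h, one_smul]
        · exact h
      have hzneg : z.1 = -x.1 := by rw [hc, hcneg, neg_smul, one_smul]
      intro h
      have hmem : h • x ∈ MulAction.orbit ↥H x := MulAction.mem_orbit x h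
      rw [horb_eq] at hmem
      rcases hmem with h1 | h1
      · exact Or.inl h1
      · exact Or.inr (by rw [h1, hzneg])
  refine ⟨x.1, hx0, ?_⟩
  intro g hg
  rcases key ⟨g, hg⟩ with h1 | h1
  · left
    exact congrArg Subtype.val h1
  · right
    exact h1
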